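/- For finite partial evaluation trees t and t': if t ⟶ t' (one step of the transition relation on partial evaluation trees) then t ⊏ t' (strict refinement); and conversely, if t ⊑ t' then t ⟶* t' (t' is reachable from t in finitely many transition steps). -/

import Mathlib

/-- Judgements over configurations `C` and extended results `Option R`
    (`none` stands for the special extra result such as `?`, `wrong`, or `∞`). -/
abbrev Judg (C R : Type) := C × Option R

/-- Lift a complete judgement to an extended judgement. -/
def liftJ {C R : Type} (j : C × R) : Judg C R := (j.1, some j.2)

/-- Bounded-premises condition. -/
def BP {C R : Type} (Rules : Set (List (C × R) × (C × R))) : Prop :=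
  ∀ c : C, ∃ b : ℕ, ∀ js res, (js, (c, res)) ∈ Rules → js.length ≤ b

/-- The extended rule set `Rules_?`: original rules (lifted), start axioms
    `c ⇒ ?`, and partial rules. -/
def RulesQ {C R : Type} (Rules : Set (List (C × R) × (C × R))) :
    Set (List (Judg C R) × Judg C R) :=
  { r | (∃ c : C, r = ([], (c, none)))
      ∨ (∃ (js : List (C × R)) (c : C) (res : R), (js, (c, res)) ∈ Rules ∧ r = (js.map liftJ, (c, some res)))
      ∨ (∃ (js : List (C × R)) (c : C) (res : R) (i : ℕ) (hi : i < js.length) (u : Option R),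
          (js, (c, res)) ∈ Rules ∧
          r = ((js.take i).map liftJ ++ [((js[i]'hi).1, u)], (c, none))) }

/-- Ordered trees labelled in `L`: partial functions from positions (lists of
    child indices) to labels, with nonempty, prefix-closed,
    sibling-downward-closed domain. -/
structure OTree (L : Type) where
  label : List ℕ → Option L
  root_isSome : (label []).isSome
  pref : ∀ α n, (label (α ++ [n])).isSome → (label α).isSome
  sib : ∀ α n k, (label (α ++ [n])).isSome → k ≤ n → (label (α ++ [k])).isSome

/-- A tree is an evaluation tree in a rule set: at every node, the ordered
    children labels together with the node label form a rule. -/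
def IsTreeIn {L : Type} (Rules : Set (List L × L)) (t : OTree L) : Prop :=
  ∀ α l, t.label α = some l →
    ∃ ps : List L, (∀ i : ℕ, t.label (α ++ [i]) = ps[i]?) ∧ (ps, l) ∈ Rules

/-- Partial evaluation trees: evaluation trees in `Rules_?`. -/
def IsPET {C R : Type} (Rules : Set (List (C × R) × (C × R)))
    (t : OTree (Judg C R)) : Prop :=
  IsTreeIn (RulesQ Rules) t

/-- The refinement relation `⊑` on trees labelled by possibly-incomplete
    judgements. -/
def TreeLE {C R : Type} (t t' : OTree (Judg C R)) : Prop :=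
  (∀ α, (t.label α).isSome → (t'.label α).isSome) ∧
  ∀ α c u, t.label α = some (c, u) →
    (∃ (u' : Option R), t'.label α = some (c, u')) ∧
    (u.isSome → ∀ β, t.label (α ++ β) = t'.label (α ++ β))

/-- Strict refinement `⊏`. -/
def TreeLT {C R : Type} (t t' : OTree (Judg C R)) : Prop :=
  TreeLE t t' ∧ t ≠ t'

/-- A tree is finite if its domain is finite. -/
def TreeFinite {L : Type} (t : OTree L) : Prop :=
  Set.Finite {α | (t.label α).isSome}

/-- Well-formedness: every subtree rooted at a complete node is finite. -/
def WellFormed {C R : Type} (t : OTree (Judg C R)) : Prop :=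
  ∀ α c r, t.label α = some (c, some r) →
    Set.Finite {β | (t.label (α ++ β)).isSome}

/-- `t` is a least upper bound of the sequence `f` w.r.t. `⊑`. -/
def IsLubSeq {C R : Type} (f : ℕ → OTree (Judg C R)) (t : OTree (Judg C R)) : Prop :=
  (∀ n, TreeLE (f n) t) ∧ ∀ t', (∀ n, TreeLE (f n) t') → TreeLE t t'

/-- Inductive derivability in a rule set with finite-list premises. -/
inductive IndDerives {J : Type} (Rules : Set (List J × J)) : J → Prop where
  | node (ps : List J) (j : J) : (ps, j) ∈ Rules →
      (∀ p ∈ ps, IndDerives Rules p) → IndDerives Rules j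

/-- A set of judgements is consistent w.r.t. a rule set. -/
def ConsistentL {J : Type} (Rules : Set (List J × J)) (X : Set J) : Prop :=
  ∀ j ∈ X, ∃ (ps : List J), (ps, j) ∈ Rules ∧ ∀ p ∈ ps, p ∈ X

/-- Coinductive derivability: membership in some consistent set. -/
def CoDerives {J : Type} (Rules : Set (List J × J)) (j : J) : Prop :=
  ∃ (X : Set J), ConsistentL Rules X ∧ j ∈ X

/-- Derivability in a generalised inference system (rules + corules):
    membership in a consistent set all of whose elements have a finite
    derivation using both rules and corules. -/
def GenDerives {J : Type} (rules corules : Set (List J × J)) (j : J) : Prop :=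
  ∃ (X : Set J), ConsistentL rules X ∧ (∀ x ∈ X, IndDerives (rules ∪ corules) x) ∧ j ∈ X
/-- The single-node tree. -/
def leafT {L : Type} (l : L) : OTree L where
  label α := if α = [] then some l else none
  root_isSome := by simp
  pref := by
    intro α n h
    simp at h
  sib := by
    intro α n k h _
    simp at h

/-- The tree with root label `l` and ordered list of immediate subtrees `ts`. -/
def nodeT {L : Type} (l : L) (ts : List (OTree L)) : OTree L where
  label α :=
    match α with
    | [] => some l
    | i :: β => (ts[i]?).bind fun t => t.label β
  root_isSome := by simp
  pref := by
    intro α n h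
    match α with
    | [] => rfl
    | i :: β =>
      replace h : (ts[i]?.bind fun t => t.label (β ++ [n])).isSome = true := h
      show (ts[i]?.bind fun t => t.label β).isSome = true
      rcases hts : ts[i]? with _ | t
      · rw [hts] at h; simp at h
      · rw [hts] at h
        simpa using t.pref β n (by simpa using h)
  sib := by
    intro α n k h hk
    match α with
    | [] =>
      replace h : (ts[n]?.bind fun t => t.label []).isSome = true := h
      show (ts[k]?.bind fun t => t.label []).isSome = true
      rcases hts : ts[n]? with _ | t
      · rw [hts] at h; simp at h
      · have hn : n < ts.length := by
          by_contra hc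
          rw [List.getElem?_eq_none (by omega)] at hts
          cases hts
        have hk' : k < ts.length := lt_of_le_of_lt hk hn
        rw [List.getElem?_eq_getElem hk']
        simpa using (ts[k]'hk').root_isSome
    | i :: β =>
      replace h : (ts[i]?.bind fun t => t.label (β ++ [n])).isSome = true := h
      show (ts[i]?.bind fun t => t.label (β ++ [k])).isSome = true
      rcases hts : ts[i]? with _ | t
      · rw [hts] at h; simp at h
      · rw [hts] at h
        simpa using t.sib β n k (by simpa using h) hk

/-- The transition relation on (finite) partial evaluation trees. -/
inductive Step {C R : Type} (Rules : Set (List (C × R) × (C × R))) :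
    OTree (Judg C R) → OTree (Judg C R) → Prop where
  | tr1 (c : C) (r : R) (h : ([], (c, r)) ∈ Rules) :
      Step Rules (leafT (c, none)) (leafT (c, some r))
  | tr2 (js : List (C × R)) (c : C) (res : R) (hne : js ≠ [])
      (h : (js, (c, res)) ∈ Rules) :
      Step Rules (leafT (c, none))
        (nodeT (c, none) [leafT ((js.head hne).1, none)])
  | tr3 (js : List (C × R)) (c : C) (res : R) (trs : List (OTree (Judg C R)))
      (h : (js, (c, res)) ∈ Rules) (hlen : trs.length = js.length)
      (hroots : ∀ (k : ℕ) (hk : k < js.length),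
        ∃ (t : OTree (Judg C R)), trs[k]? = some t ∧
          t.label [] = some (liftJ (js[k]'hk))) :
      Step Rules (nodeT (c, none) trs) (nodeT (c, some res) trs)
  | tr4 (js : List (C × R)) (c : C) (res : R) (trs : List (OTree (Judg C R)))
      (h : (js, (c, res)) ∈ Rules) (hne : trs ≠ [])
      (hlt : trs.length < js.length)
      (hroots : ∀ (k : ℕ) (hk : k < trs.length),
        ∃ (t : OTree (Judg C R)), trs[k]? = some t ∧
          t.label [] = some (liftJ (js[k]'(Nat.lt_trans hk hlt)))) :
      Step Rules (nodeT (c, none) trs)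
        (nodeT (c, none) (trs ++ [leafT ((js[trs.length]'hlt).1, none)]))
  | tr5 (js : List (C × R)) (c : C) (res : R) (trs : List (OTree (Judg C R)))
      (t t' : OTree (Judg C R))
      (h : (js, (c, res)) ∈ Rules)
      (hlt : trs.length < js.length)
      (hroots : ∀ (k : ℕ) (hk : k < trs.length),
        ∃ (s : OTree (Judg C R)), trs[k]? = some s ∧
          s.label [] = some (liftJ (js[k]'(Nat.lt_trans hk hlt))))
      (hconf : t.label [] = some ((js[trs.length]'hlt).1, none))
      (hstep : Step Rules t t') :
      Step Rules (nodeT (c, none) (trs ++ [t])) (nodeT (c, none) (trs ++ [t']))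

section Aux
variable {C R L : Type}

theorem OTree.ext' {t t' : OTree L} (h : ∀ α, t.label α = t'.label α) : t = t' := by
  cases t; cases t'
  simp only [OTree.mk.injEq]
  exact funext h

@[simp] theorem leafT_label (l : L) (α : List ℕ) :
    (leafT l).label α = if α = [] then some l else none := rfl

@[simp] theorem nodeT_label_nil (l : L) (ts : List (OTree L)) :
    (nodeT l ts).label [] = some l := rfl

@[simp] theorem nodeT_label_cons (l : L) (ts : List (OTree L)) (i : ℕ) (β : List ℕ) :
    (nodeT l ts).label (i :: β) = (ts[i]?).bind fun t => t.label β := rfl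

theorem label_isSome_prefix (t : OTree L) (α β : List ℕ)
    (h : (t.label (α ++ β)).isSome) : (t.label α).isSome := by
  induction β using List.reverseRecOn with
  | nil => simpa using h
  | append_singleton γ n ih =>
    exact ih (t.pref (α ++ γ) n (by rwa [← List.append_assoc] at h))

/-- Subtree at child `i` (junk value if no such child). -/
noncomputable def subT (t : OTree L) (i : ℕ) : OTree L :=
  if h : (t.label [i]).isSome then
    { label := fun β => t.label (i :: β)
      root_isSome := h
      pref := fun α n h' => t.pref (i :: α) n h'
      sib := fun α n k h' hk => t.sib (i :: α) n k h' hk }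
  else leafT ((t.label []).get t.root_isSome)

theorem subT_label (t : OTree L) (i : ℕ) (h : (t.label [i]).isSome) (β : List ℕ) :
    (subT t i).label β = t.label (i :: β) := by
  rw [subT, dif_pos h]

noncomputable def childrenT (t : OTree L) (m : ℕ) : List (OTree L) :=
  List.ofFn fun k : Fin m => subT t k

@[simp] theorem childrenT_length (t : OTree L) (m : ℕ) :
    (childrenT t m).length = m := by simp [childrenT]

theorem childrenT_get (t : OTree L) (m k : ℕ) (hk : k < m) :
    (childrenT t m)[k]? = some (subT t k) := by
  rw [List.getElem?_eq_getElem (by simpa using hk)]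
  simp [childrenT]

theorem childrenT_succ (t : OTree L) (m : ℕ) :
    childrenT t (m + 1) = childrenT t m ++ [subT t m] := by
  rw [childrenT, List.ofFn_succ']
  simp [childrenT, List.concat_eq_append]

theorem eq_nodeT (t : OTree L) (l : L) (m : ℕ) (hl : t.label [] = some l)
    (hm : ∀ k, (t.label [k]).isSome ↔ k < m) :
    t = nodeT l (childrenT t m) := by
  apply OTree.ext'; intro α
  match α with
  | [] => simpa using hl
  | i :: β =>
    rw [nodeT_label_cons]
    by_cases hi : i < m
    · rw [childrenT_get t m i hi, Option.bind_some, subT_label t i ((hm i).mpr hi)]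
    · have h1 : (childrenT t m)[i]? = none := by
        rw [List.getElem?_eq_none]; simpa using not_lt.mp hi
      rw [h1, Option.bind_none]
      cases hl2 : t.label (i :: β) with
      | none => rfl
      | some _ =>
        exact absurd ((hm i).mp (label_isSome_prefix t [i] β (by show (t.label (i::β)).isSome; rw [hl2]; rfl)))
          hi

end Aux
section Aux2
variable {C R L : Type}

theorem treeLE_refl (t : OTree (Judg C R)) : TreeLE t t :=
  ⟨fun _ h => h, fun _ _ u h => ⟨⟨u, h⟩, fun _ _ => rfl⟩⟩

theorem treeLE_subT {t t' : OTree (Judg C R)} (h : TreeLE t t') (i : ℕ)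
    (hi : (t.label [i]).isSome) : TreeLE (subT t i) (subT t' i) := by
  have hi' : (t'.label [i]).isSome := h.1 [i] hi
  constructor
  · intro α hα
    rw [subT_label t i hi] at hα
    rw [subT_label t' i hi']
    exact h.1 (i :: α) hα
  · intro α c u hα
    rw [subT_label t i hi] at hα
    obtain ⟨⟨u', hu'⟩, hcomp⟩ := h.2 (i :: α) c u hα
    refine ⟨⟨u', by rw [subT_label t' i hi']; exact hu'⟩, fun hus β => ?_⟩
    rw [subT_label t i hi, subT_label t' i hi']
    exact hcomp hus β

theorem treeFinite_subT {t : OTree L} (hf : TreeFinite t) (i : ℕ)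
    (hi : (t.label [i]).isSome) : TreeFinite (subT t i) := by
  have : {α | ((subT t i).label α).isSome} = (fun β => i :: β) ⁻¹' {α | (t.label α).isSome} := by
    ext β; simp [Set.mem_preimage, subT_label t i hi]
  rw [TreeFinite, this]
  exact Set.Finite.preimage (Set.injOn_of_injective (fun a b hab => by injection hab)) hf

theorem ncard_subT_lt {t : OTree L} (hf : TreeFinite t) (i : ℕ)
    (hi : (t.label [i]).isSome) :
    {α | ((subT t i).label α).isSome}.ncard < {α | (t.label α).isSome}.ncard := by
  have hinj : Function.Injective (fun β : List ℕ => i :: β) := fun a b hab => by injection hab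
  have himg : (fun β : List ℕ => i :: β) '' {α | ((subT t i).label α).isSome}
      ⊆ {α | (t.label α).isSome} \ {[]} := by
    rintro γ ⟨β, hβ, rfl⟩
    refine ⟨?_, by simp⟩
    simpa [subT_label t i hi] using hβ
  calc {α | ((subT t i).label α).isSome}.ncard
      = ((fun β : List ℕ => i :: β) '' {α | ((subT t i).label α).isSome}).ncard :=
        (Set.ncard_image_of_injective _ hinj).symm
    _ ≤ ({α | (t.label α).isSome} \ {[]}).ncard :=
        Set.ncard_le_ncard himg ((hf.subset Set.diff_subset))
    _ < {α | (t.label α).isSome}.ncard :=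
        Set.ncard_diff_singleton_lt_of_mem t.root_isSome hf

theorem isTreeIn_subT {Rules' : Set (List L × L)} {t : OTree L}
    (h : IsTreeIn Rules' t) (i : ℕ) (hi : (t.label [i]).isSome) :
    IsTreeIn Rules' (subT t i) := by
  intro β l hl
  rw [subT_label t i hi] at hl
  obtain ⟨ps, h1, h2⟩ := h (i :: β) l hl
  refine ⟨ps, fun k => ?_, h2⟩
  rw [subT_label t i hi]
  exact h1 k

/-- Assemble `⊑` into a node with incomplete root. -/
theorem treeLE_nodeT {c : C} {ts : List (OTree (Judg C R))} {t' : OTree (Judg C R)}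
    (hroot : ∃ u', t'.label [] = some (c, u'))
    (hk : ∀ k (hk : k < ts.length),
      (t'.label [k]).isSome ∧ TreeLE (ts[k]'hk) (subT t' k)) :
    TreeLE (nodeT ((c : C), (none : Option R)) ts) t' := by
  constructor
  · intro α hα
    match α with
    | [] => exact t'.root_isSome
    | i :: β =>
      rw [nodeT_label_cons] at hα
      rcases hts : ts[i]? with _ | s
      · rw [hts] at hα; simp at hα
      · rw [hts] at hα
        have hilt : i < ts.length := by
          by_contra hcon
          rw [List.getElem?_eq_none (not_lt.mp hcon)] at hts
          cases hts
        obtain ⟨hsome, hle⟩ := hk i hilt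
        rw [List.getElem?_eq_getElem hilt] at hts
        have := hle.1 β (by injection hts with h'; rw [h']; simpa using hα)
        rwa [subT_label t' i hsome] at this
  · intro α cc u hα
    match α with
    | [] =>
      rw [nodeT_label_nil] at hα
      injection hα with h'
      obtain ⟨u', hu'⟩ := hroot
      injection h' with h1 h2
      subst h1; subst h2
      exact ⟨⟨u', hu'⟩, fun hus => by simp at hus⟩
    | i :: β =>
      rw [nodeT_label_cons] at hα
      rcases hts : ts[i]? with _ | s
      · rw [hts] at hα; simp at hα
      · rw [hts] at hα
        have hilt : i < ts.length := by
          by_contra hcon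
          rw [List.getElem?_eq_none (not_lt.mp hcon)] at hts
          cases hts
        obtain ⟨hsome, hle⟩ := hk i hilt
        rw [List.getElem?_eq_getElem hilt] at hts
        have hseq : ts[i]'hilt = s := by injection hts
        have hβ : s.label β = some (cc, u) := by simpa using hα
        obtain ⟨⟨u', hu'⟩, hcomp⟩ := hle.2 β cc u (by rw [hseq]; exact hβ)
        rw [subT_label t' i hsome] at hu'
        refine ⟨⟨u', hu'⟩, fun hus γ => ?_⟩
        have := hcomp hus γ
        rw [subT_label t' i hsome, hseq] at this
        show (ts[i]?.bind fun s => s.label (β ++ γ)) = _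
        rw [List.getElem?_eq_getElem hilt, hseq, Option.bind_some]
        exact this

theorem treeLE_leafT {c : C} {s : OTree (Judg C R)} {w : Option R}
    (h : s.label [] = some (c, w)) : TreeLE (leafT ((c : C), (none : Option R))) s := by
  constructor
  · intro α hα
    simp only [leafT_label] at hα
    split at hα
    · subst ‹α = []›; exact s.root_isSome
    · simp at hα
  · intro α cc u hα
    simp only [leafT_label] at hα
    split at hα
    · subst ‹α = []›
      injection hα with h'
      injection h' with h1 h2
      subst h1; subst h2
      exact ⟨⟨w, h⟩, fun hus => by simp at hus⟩
    · simp at hα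

end Aux2
section Aux3
variable {C R L : Type}

theorem nodeT_label_lt (l : L) (trs : List (OTree L)) {i : ℕ} (h : i < trs.length) (β : List ℕ) :
    (nodeT l trs).label (i :: β) = (trs[i]'h).label β := by
  rw [nodeT_label_cons, List.getElem?_eq_getElem h, Option.bind_some]

theorem nodeT_label_ge (l : L) (trs : List (OTree L)) {i : ℕ} (h : trs.length ≤ i) (β : List ℕ) :
    (nodeT l trs).label (i :: β) = none := by
  rw [nodeT_label_cons, List.getElem?_eq_none h, Option.bind_none]

theorem nodeT_append_lt (l : L) (trs : List (OTree L)) (x : OTree L) {i : ℕ}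
    (h : i < trs.length) (β : List ℕ) :
    (nodeT l (trs ++ [x])).label (i :: β) = (trs[i]'h).label β := by
  rw [nodeT_label_cons, List.getElem?_append_left h, List.getElem?_eq_getElem h, Option.bind_some]

theorem nodeT_append_last (l : L) (trs : List (OTree L)) (x : OTree L) (β : List ℕ) :
    (nodeT l (trs ++ [x])).label (trs.length :: β) = x.label β := by
  rw [nodeT_label_cons, List.getElem?_append_right le_rfl]
  simp

theorem nodeT_append_gt (l : L) (trs : List (OTree L)) (x : OTree L) {i : ℕ}
    (h : trs.length < i) (β : List ℕ) :
    (nodeT l (trs ++ [x])).label (i :: β) = none := by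
  rw [nodeT_label_ge]
  simpa using h

theorem nodeT_label_cases {l : L} {trs : List (OTree L)} {i : ℕ} {β : List ℕ} {j : L}
    (h : (nodeT l trs).label (i :: β) = some j) :
    ∃ hi : i < trs.length, (trs[i]'hi).label β = some j := by
  by_cases hi : i < trs.length
  · exact ⟨hi, by rwa [nodeT_label_lt l trs hi] at h⟩
  · rw [nodeT_label_ge l trs (not_lt.mp hi)] at h
    cases h

theorem step_lt {Rules : Set (List (C × R) × (C × R))} {t t' : OTree (Judg C R)}
    (h : Step Rules t t') : TreeLT t t' := by
  induction h with
  | tr1 c r h =>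
    constructor
    · constructor
      · intro α hα
        simp only [leafT_label] at hα ⊢
        split at hα
        · simp [*]
        · simp at hα
      · intro α cc u hα
        simp only [leafT_label] at hα
        split at hα
        · subst ‹α = []›
          injection hα with h'; injection h' with h1 h2; subst h1; subst h2
          exact ⟨⟨some r, by simp⟩, fun hus => by simp at hus⟩
        · simp at hα
    · intro heq
      have := congrArg (fun s => OTree.label s []) heq
      simp [leafT_label] at this
  | tr2 js c res hne h =>
    constructor
    · constructor
      · intro α hα
        simp only [leafT_label] at hα
        split at hα
        · subst ‹α = []›; exact OTree.root_isSome _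
        · simp at hα
      · intro α cc u hα
        simp only [leafT_label] at hα
        split at hα
        · subst ‹α = []›
          injection hα with h'; injection h' with h1 h2; subst h1; subst h2
          exact ⟨⟨none, rfl⟩, fun hus => by simp at hus⟩
        · simp at hα
    · intro heq
      have := congrArg (fun s => OTree.label s [0]) heq
      simp only [leafT_label] at this
      rw [show OTree.label (nodeT ((c : C), (none : Option R))
        [leafT ((js.head hne).1, none)]) [0] = some ((js.head hne).1, none) from rfl] at this
      simp at this
  | tr3 js c res trs h hlen hroots =>
    constructor
    · constructor
      · intro α hα
        match α with
        | [] => rfl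
        | i :: β => exact hα
      · intro α cc u hα
        match α with
        | [] =>
          rw [nodeT_label_nil] at hα
          injection hα with h'; injection h' with h1 h2; subst h1; subst h2
          exact ⟨⟨some res, rfl⟩, fun hus => by simp at hus⟩
        | i :: β =>
          exact ⟨⟨u, hα⟩, fun _ γ => rfl⟩
    · intro heq
      have := congrArg (fun s => OTree.label s []) heq
      simp only [nodeT_label_nil] at this
      simp at this
  | tr4 js c res trs h hne hlt hroots =>
    constructor
    · constructor
      · intro α hα
        match α with
        | [] => exact OTree.root_isSome _
        | i :: β =>
          rcases hα' : (nodeT ((c : C), (none : Option R)) trs).label (i :: β) with _ | j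
          · rw [hα'] at hα; simp at hα
          · obtain ⟨hi, hj⟩ := nodeT_label_cases hα'
            rw [nodeT_append_lt _ trs _ hi, hj]; rfl
      · intro α cc u hα
        match α with
        | [] =>
          rw [nodeT_label_nil] at hα
          injection hα with h'; injection h' with h1 h2; subst h1; subst h2
          exact ⟨⟨none, rfl⟩, fun hus => by simp at hus⟩
        | i :: β =>
          obtain ⟨hi, hj⟩ := nodeT_label_cases hα
          refine ⟨⟨u, by rw [nodeT_append_lt _ trs _ hi]; exact hj⟩, fun hus γ => ?_⟩
          show OTree.label _ ((i :: β) ++ γ) = OTree.label _ ((i :: β) ++ γ)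
          rw [List.cons_append, nodeT_append_lt _ trs _ hi, nodeT_label_lt _ trs hi]
    · intro heq
      have hlab : (nodeT ((c : C), (none : Option R)) trs).label [trs.length]
          = (nodeT ((c : C), (none : Option R))
              (trs ++ [leafT ((js[trs.length]'hlt).1, none)])).label [trs.length] := by
        rw [heq]
      rw [show ([trs.length] : List ℕ) = trs.length :: [] from rfl,
        nodeT_label_ge _ trs le_rfl, nodeT_append_last _ trs _ []] at hlab
      simp at hlab
  | tr5 js c res trs t0 t0' h hlt hroots hconf hstep ih =>
    obtain ⟨⟨ih1, ih2⟩, ihne⟩ := ih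
    constructor
    · constructor
      · intro α hα
        match α with
        | [] => exact OTree.root_isSome _
        | i :: β =>
          obtain ⟨j, hj0⟩ := Option.isSome_iff_exists.mp hα
          obtain ⟨hi, hj⟩ := nodeT_label_cases hj0
          have hi' : i < trs.length + 1 := by simpa using hi
          rcases lt_or_eq_of_le (Nat.lt_succ_iff.mp hi') with hilt | hieq
          · rw [nodeT_append_lt _ trs _ hilt]
            rw [show (trs ++ [t0])[i]'hi = trs[i]'hilt from List.getElem_append_left hilt] at hj
            rw [hj]; rfl
          · subst hieq
            rw [nodeT_append_last _ trs _ β]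
            apply ih1
            rw [show (trs ++ [t0])[trs.length]'hi = t0 from by
              simp] at hj
            rw [hj]; rfl
      · intro α cc u hα
        match α with
        | [] =>
          rw [nodeT_label_nil] at hα
          injection hα with h'; injection h' with h1 h2; subst h1; subst h2
          exact ⟨⟨none, rfl⟩, fun hus => by simp at hus⟩
        | i :: β =>
          obtain ⟨hi, hj⟩ := nodeT_label_cases hα
          have hi' : i < trs.length + 1 := by simpa using hi
          rcases lt_or_eq_of_le (Nat.lt_succ_iff.mp hi') with hilt | hieq
          · rw [show (trs ++ [t0])[i]'hi = trs[i]'hilt from List.getElem_append_left hilt] at hj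
            refine ⟨⟨u, by rw [nodeT_append_lt _ trs _ hilt]; exact hj⟩, fun hus γ => ?_⟩
            show OTree.label _ ((i :: β) ++ γ) = OTree.label _ ((i :: β) ++ γ)
            rw [List.cons_append, nodeT_append_lt _ trs _ hilt, nodeT_append_lt _ trs _ hilt]
          · subst hieq
            rw [show (trs ++ [t0])[trs.length]'hi = t0 from by simp] at hj
            obtain ⟨⟨u', hu'⟩, hcomp⟩ := ih2 β cc u hj
            refine ⟨⟨u', by rw [nodeT_append_last _ trs _ β]; exact hu'⟩, fun hus γ => ?_⟩
            show OTree.label _ ((trs.length :: β) ++ γ) = OTree.label _ ((trs.length :: β) ++ γ)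
            rw [List.cons_append, nodeT_append_last _ trs _ (β ++ γ),
              nodeT_append_last _ trs _ (β ++ γ)]
            exact hcomp hus γ
    · intro heq
      apply ihne
      apply OTree.ext'
      intro β
      have hlab : (nodeT ((c : C), (none : Option R)) (trs ++ [t0])).label (trs.length :: β)
          = (nodeT ((c : C), (none : Option R)) (trs ++ [t0'])).label (trs.length :: β) := by
        rw [heq]
      rwa [nodeT_append_last _ trs _ β, nodeT_append_last _ trs _ β] at hlab

end Aux3
section Aux4
variable {C R L : Type}

def domS (t : OTree L) : Set (List ℕ) := {α | (t.label α).isSome}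

def compS (t : OTree (Judg C R)) : Set (List ℕ) := {α | ∃ c r, t.label α = some (c, some r)}

theorem compS_subset_domS (t : OTree (Judg C R)) : compS t ⊆ domS t := by
  rintro α ⟨c, r, h⟩; simp [domS, h]

noncomputable def wt (t : OTree (Judg C R)) : ℕ := (domS t).ncard + (compS t).ncard

theorem domS_mono {t t' : OTree (Judg C R)} (h : TreeLE t t') : domS t ⊆ domS t' :=
  fun α hα => h.1 α hα

theorem compS_mono {t t' : OTree (Judg C R)} (h : TreeLE t t') : compS t ⊆ compS t' := by
  rintro α ⟨c, r, hl⟩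
  have := (h.2 α c (some r) hl).2 (by simp) []
  simp only [List.append_nil] at this
  exact ⟨c, r, by rw [← this]; exact hl⟩

theorem wt_le {t t' : OTree (Judg C R)} (h : TreeLE t t') (hf' : TreeFinite t') :
    wt t ≤ wt t' := by
  have h1 := Set.ncard_le_ncard (domS_mono h) hf'
  have h2 := Set.ncard_le_ncard (compS_mono h) (hf'.subset (compS_subset_domS t'))
  unfold wt; omega

theorem eq_of_doms {t t' : OTree (Judg C R)} (h : TreeLE t t')
    (hd : domS t' ⊆ domS t) (hc : compS t' ⊆ compS t) : t = t' := by
  apply OTree.ext'; intro α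
  rcases hl : t.label α with _ | ⟨c, u⟩
  · rcases hl' : t'.label α with _ | j
    · rfl
    · exact absurd (hd (by simp [domS, hl'] : α ∈ domS t')) (by simp [domS, hl])
  · rcases u with _ | r
    · obtain ⟨u', hu'⟩ := (h.2 α c none hl).1
      rcases u' with _ | r'
      · rw [hu']
      · exact absurd (hc ⟨c, r', hu'⟩) (by rintro ⟨c'', r'', hx⟩; rw [hl] at hx; simp at hx)
    · have := (h.2 α c (some r) hl).2 (by simp) []
      simp only [List.append_nil] at this
      rw [← this, hl]

theorem wt_lt {t t' : OTree (Judg C R)} (h : TreeLE t t') (hne : t ≠ t')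
    (hf' : TreeFinite t') : wt t < wt t' := by
  have hd := domS_mono h
  have hc := compS_mono h
  have hkey : ¬(domS t' ⊆ domS t ∧ compS t' ⊆ compS t) := by
    rintro ⟨h1, h2⟩; exact hne (eq_of_doms h h1 h2)
  rw [not_and_or] at hkey
  rcases hkey with h1 | h2
  · have : domS t ⊂ domS t' := ⟨hd, h1⟩
    have hlt := Set.ncard_lt_ncard this hf'
    have := Set.ncard_le_ncard hc (hf'.subset (compS_subset_domS t'))
    unfold wt; omega
  · have : compS t ⊂ compS t' := ⟨hc, h2⟩
    have hlt := Set.ncard_lt_ncard this (hf'.subset (compS_subset_domS t'))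
    have := Set.ncard_le_ncard hd hf'
    unfold wt; omega

theorem ruleQ_axiom {Rules : Set (List (C × R) × (C × R))} (c : C) :
    (([] : List (Judg C R)), ((c : C), (none : Option R))) ∈ RulesQ Rules :=
  Or.inl ⟨c, rfl⟩

theorem ruleQ_lift {Rules : Set (List (C × R) × (C × R))} {js : List (C × R)} {c : C} {res : R}
    (h : (js, (c, res)) ∈ Rules) :
    (js.map liftJ, ((c : C), some res)) ∈ RulesQ Rules :=
  Or.inr (Or.inl ⟨js, c, res, h, rfl⟩)

theorem ruleQ_partial {Rules : Set (List (C × R) × (C × R))} {js : List (C × R)} {c : C} {res : R}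
    (h : (js, (c, res)) ∈ Rules) {i : ℕ} (hi : i < js.length) (u : Option R) :
    ((js.take i).map liftJ ++ [((js[i]'hi).1, u)], ((c : C), (none : Option R))) ∈ RulesQ Rules :=
  Or.inr (Or.inr ⟨js, c, res, i, hi, u, h, rfl⟩)

theorem plen {js : List (C × R)} {i : ℕ} (hi : i < js.length) (u : Option R) :
    ((js.take i).map liftJ ++ [((js[i]'hi).1, u)]).length = i + 1 := by
  simp [Nat.min_eq_left (le_of_lt hi)]

theorem pget_lt {js : List (C × R)} {i : ℕ} (hi : i < js.length) (u : Option R)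
    {k : ℕ} (hk : k < i) :
    ((js.take i).map liftJ ++ [((js[i]'hi).1, u)])[k]? =
      some (liftJ (js[k]'(lt_trans hk hi))) := by
  rw [List.getElem?_append_left (by simp [Nat.min_eq_left (le_of_lt hi)]; omega)]
  rw [List.getElem?_eq_getElem (by simp [Nat.min_eq_left (le_of_lt hi)]; omega)]
  congr 1
  rw [List.getElem_map, List.getElem_take]

theorem pget_last {js : List (C × R)} {i : ℕ} (hi : i < js.length) (u : Option R) :
    ((js.take i).map liftJ ++ [((js[i]'hi).1, u)])[i]? = some ((js[i]'hi).1, u) := by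
  rw [List.getElem?_append_right (by simp [Nat.min_eq_left (le_of_lt hi)])]
  simp [Nat.min_eq_left (le_of_lt hi)]

theorem lget {js : List (C × R)} {k : ℕ} (hk : k < js.length) :
    (js.map liftJ)[k]? = some (liftJ (js[k]'hk)) := by
  rw [List.getElem?_eq_getElem (by simpa using hk)]
  simp

theorem isTreeIn_leafT {Rules' : Set (List L × L)} {l : L} (h : ([], l) ∈ Rules') :
    IsTreeIn Rules' (leafT l) := by
  intro α j hj
  simp only [leafT_label] at hj
  split at hj
  · subst ‹α = []›
    injection hj with h'
    subst h'
    refine ⟨[], fun k => ?_, h⟩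
    simp [leafT_label]
  · cases hj

theorem isTreeIn_nodeT {Rules' : Set (List L × L)} {l : L} {ts : List (OTree L)}
    (ps : List L) (hrule : (ps, l) ∈ Rules') (hlen : ps.length = ts.length)
    (hr : ∀ k (hk : k < ts.length), (ts[k]'hk).label [] = ps[k]?)
    (hsub : ∀ k (hk : k < ts.length), IsTreeIn Rules' (ts[k]'hk)) :
    IsTreeIn Rules' (nodeT l ts) := by
  intro α j hj
  match α with
  | [] =>
    rw [nodeT_label_nil] at hj
    obtain rfl : l = j := by injection hj
    refine ⟨ps, fun k => ?_, hrule⟩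
    show (nodeT l ts).label (k :: []) = ps[k]?
    by_cases hk : k < ts.length
    · rw [nodeT_label_lt l ts hk]; exact hr k hk
    · rw [nodeT_label_ge l ts (not_lt.mp hk), List.getElem?_eq_none (by omega)]
  | i :: β =>
    obtain ⟨hi, hj'⟩ := nodeT_label_cases hj
    obtain ⟨qs, hq1, hq2⟩ := hsub i hi β j hj'
    refine ⟨qs, fun k => ?_, hq2⟩
    show (nodeT l ts).label (i :: (β ++ [k])) = qs[k]?
    rw [nodeT_label_lt l ts hi]
    exact hq1 k

theorem isTreeIn_child {Rules' : Set (List L × L)} {l : L} {ts : List (OTree L)}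
    (h : IsTreeIn Rules' (nodeT l ts)) (k : ℕ) (hk : k < ts.length) :
    IsTreeIn Rules' (ts[k]'hk) := by
  intro β j hj
  obtain ⟨qs, h1, h2⟩ := h (k :: β) j (by rw [nodeT_label_lt l ts hk]; exact hj)
  refine ⟨qs, fun m => ?_, h2⟩
  have := h1 m
  rwa [show ((k :: β) ++ [m]) = k :: (β ++ [m]) from rfl, nodeT_label_lt l ts hk] at this

end Aux4
section Aux5
variable {C R : Type}

theorem isPET_step {Rules : Set (List (C × R) × (C × R))} {t t' : OTree (Judg C R)}
    (hstep : Step Rules t t') (hpt : IsPET Rules t) : IsPET Rules t' := by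
  induction hstep with
  | tr1 c r h =>
    exact isTreeIn_leafT (by simpa using ruleQ_lift (Rules := Rules) (js := []) h)
  | tr2 js c res hne h =>
    have h0 : 0 < js.length := List.length_pos_iff.mpr hne
    have hhead : js.head hne = js[0]'h0 := by
      rw [List.getElem_zero]
    apply isTreeIn_nodeT [((js.head hne).1, (none : Option R))]
    · have := ruleQ_partial (Rules := Rules) h h0 none
      simpa [hhead] using this
    · simp
    · intro k hk
      simp only [List.length_singleton] at hk
      interval_cases k
      simp [leafT_label]
    · intro k hk
      simp only [List.length_singleton] at hk
      interval_cases k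
      exact isTreeIn_leafT (ruleQ_axiom _)
  | tr3 js c res trs h hlen hroots =>
    apply isTreeIn_nodeT (js.map liftJ) (ruleQ_lift h)
    · simp [hlen]
    · intro k hk
      obtain ⟨s, hs1, hs2⟩ := hroots k (hlen ▸ hk)
      rw [List.getElem?_eq_getElem hk] at hs1
      rw [show trs[k]'hk = s from by injection hs1, hs2, lget (hlen ▸ hk)]
    · exact fun k hk => isTreeIn_child hpt k hk
  | tr4 js c res trs h hne hlt hroots =>
    apply isTreeIn_nodeT ((js.take trs.length).map liftJ ++ [((js[trs.length]'hlt).1, none)])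
      (ruleQ_partial h hlt none)
    · rw [plen hlt none]; simp
    · intro k hk
      simp only [List.length_append, List.length_singleton] at hk
      rcases lt_or_eq_of_le (Nat.lt_succ_iff.mp hk) with hklt | hkeq
      · obtain ⟨s, hs1, hs2⟩ := hroots k hklt
        rw [List.getElem?_eq_getElem hklt] at hs1
        rw [show (trs ++ [leafT ((js[trs.length]'hlt).1, none)])[k]'(by simp; omega) = trs[k]'hklt
          from List.getElem_append_left hklt, show trs[k]'hklt = s from by injection hs1, hs2,
          pget_lt hlt none hklt]
      · subst hkeq
        rw [show (trs ++ [leafT ((js[trs.length]'hlt).1, none)])[trs.length]'(by simp) =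
          leafT ((js[trs.length]'hlt).1, none) from by simp, pget_last hlt none]
        simp [leafT_label]
    · intro k hk
      simp only [List.length_append, List.length_singleton] at hk
      rcases lt_or_eq_of_le (Nat.lt_succ_iff.mp hk) with hklt | hkeq
      · rw [show (trs ++ [leafT ((js[trs.length]'hlt).1, none)])[k]'(by simp; omega) = trs[k]'hklt
          from List.getElem_append_left hklt]
        exact isTreeIn_child hpt k hklt
      · subst hkeq
        rw [show (trs ++ [leafT ((js[trs.length]'hlt).1, none)])[trs.length]'(by simp) =
          leafT ((js[trs.length]'hlt).1, none) from by simp]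
        exact isTreeIn_leafT (ruleQ_axiom _)
  | tr5 js c res trs t0 t0' h hlt hroots hconf hstep ih =>
    obtain ⟨⟨u', hu'⟩, _⟩ := (step_lt hstep).1.2 [] _ none hconf
    apply isTreeIn_nodeT ((js.take trs.length).map liftJ ++ [((js[trs.length]'hlt).1, u')])
      (ruleQ_partial h hlt u')
    · rw [plen hlt u']; simp
    · intro k hk
      simp only [List.length_append, List.length_singleton] at hk
      rcases lt_or_eq_of_le (Nat.lt_succ_iff.mp hk) with hklt | hkeq
      · obtain ⟨s, hs1, hs2⟩ := hroots k hklt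
        rw [List.getElem?_eq_getElem hklt] at hs1
        rw [show (trs ++ [t0'])[k]'(by simp; omega) = trs[k]'hklt
          from List.getElem_append_left hklt, show trs[k]'hklt = s from by injection hs1, hs2,
          pget_lt hlt u' hklt]
      · subst hkeq
        rw [show (trs ++ [t0'])[trs.length]'(by simp) = t0' from by simp, pget_last hlt u']
        exact hu'
    · intro k hk
      simp only [List.length_append, List.length_singleton] at hk
      rcases lt_or_eq_of_le (Nat.lt_succ_iff.mp hk) with hklt | hkeq
      · rw [show (trs ++ [t0'])[k]'(by simp; omega) = trs[k]'hklt
          from List.getElem_append_left hklt]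
        have := isTreeIn_child hpt k (by simp; omega)
        rwa [show (trs ++ [t0])[k]'(by simp; omega) = trs[k]'hklt
          from List.getElem_append_left hklt] at this
      · subst hkeq
        rw [show (trs ++ [t0'])[trs.length]'(by simp) = t0' from by simp]
        apply ih
        have := isTreeIn_child hpt trs.length (by simp)
        rwa [show (trs ++ [t0])[trs.length]'(by simp) = t0 from by simp] at this

end Aux5
section Aux6
variable {C R : Type}

theorem childrenT_getElem {L : Type} (t : OTree L) (m k : ℕ) (h : k < (childrenT t m).length) :
    (childrenT t m)[k]'h = subT t k := by
  simp [childrenT]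

theorem eq_leafT {L : Type} {t : OTree L} {l : L} (hl : t.label [] = some l)
    (h0 : t.label [0] = none) : t = leafT l := by
  apply OTree.ext'; intro α
  match α with
  | [] => simpa using hl
  | k :: β =>
    have hk : t.label [k] = none := by
      cases h : t.label [k] with
      | none => rfl
      | some _ =>
        have := t.sib [] k 0 (show (t.label [k]).isSome by simp [h]) (Nat.zero_le k)
        rw [show (([] : List ℕ) ++ [0]) = [0] from rfl, h0] at this
        simp at this
    have : t.label (k :: β) = none := by
      cases h : t.label (k :: β) with
      | none => rfl
      | some _ =>
        have := label_isSome_prefix t [k] β (show (t.label (k :: β)).isSome by simp [h])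
        rw [hk] at this; simp at this
    rw [this]; simp

theorem eq_of_children {t t' : OTree (Judg C R)} (m : ℕ)
    (hroot : t.label [] = t'.label [])
    (hm : ∀ k, (t.label [k]).isSome ↔ k < m) (hm' : ∀ k, (t'.label [k]).isSome ↔ k < m)
    (hsub : ∀ k, k < m → ∀ β, t.label (k :: β) = t'.label (k :: β)) : t = t' := by
  apply OTree.ext'; intro α
  match α with
  | [] => exact hroot
  | k :: β =>
    by_cases hk : k < m
    · exact hsub k hk β
    · have h1 : t.label (k :: β) = none := by
        cases h : t.label (k :: β) with
        | none => rfl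
        | some _ =>
          exact absurd ((hm k).mp (label_isSome_prefix t [k] β (by
            show (t.label (k :: β)).isSome; simp [h]))) hk
      have h2 : t'.label (k :: β) = none := by
        cases h : t'.label (k :: β) with
        | none => rfl
        | some _ =>
          exact absurd ((hm' k).mp (label_isSome_prefix t' [k] β (by
            show (t'.label (k :: β)).isSome; simp [h]))) hk
      rw [h1, h2]

end Aux6
section Aux7
variable {C R : Type}

theorem nodeT_childrenT_dom {l : Judg C R} {t : OTree (Judg C R)} (m : ℕ)
    (hdm : ∀ j : ℕ, (t.label [j]).isSome ↔ j < m) (k : ℕ) :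
    ((nodeT l (childrenT t m)).label [k]).isSome ↔ k < m := by
  by_cases hk : k < m
  · rw [show ((nodeT l (childrenT t m)).label [k]) = (subT t k).label [] from by
      rw [nodeT_label_lt l _ (by simpa using hk), childrenT_getElem]]
    rw [subT_label t k ((hdm k).mpr hk)]
    exact hdm k
  · rw [nodeT_label_ge l _ (by simpa using not_lt.mp hk)]
    simpa using hk

theorem nodeT_childrenT_label {l : Judg C R} {t : OTree (Judg C R)} (m k : ℕ) (hk : k < m)
    (hsome : (t.label [k]).isSome) (β : List ℕ) :
    (nodeT l (childrenT t m)).label (k :: β) = t.label (k :: β) := by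
  rw [nodeT_label_lt l _ (by simpa using hk), childrenT_getElem, subT_label t k hsome]

theorem isSome_getElem'' {X : Type} (l : List X) (k : ℕ) :
    (l[k]?).isSome ↔ k < l.length := by
  by_cases hk : k < l.length
  · simp [List.getElem?_eq_getElem hk, hk]
  · simp [List.getElem?_eq_none (not_lt.mp hk), hk]

theorem next_step {Rules : Set (List (C × R) × (C × R))} :
    ∀ (N : ℕ) (t t' : OTree (Judg C R)), (domS t).ncard ≤ N →
      IsPET Rules t → IsPET Rules t' → TreeFinite t → TreeFinite t' →
      TreeLE t t' → t ≠ t' →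
      ∃ t'', Step Rules t t'' ∧ TreeLE t'' t' := by
  intro N
  induction N with
  | zero =>
    intro t t' hN hpt hpt' hft hft' hle hne
    have hfin : (domS t).Finite := hft
    have hpos : 0 < (domS t).ncard := (Set.ncard_pos hfin).mpr ⟨[], t.root_isSome⟩
    omega
  | succ N ih =>
    intro t t' hN hpt hpt' hft hft' hle hne
    obtain ⟨⟨c, u⟩, hr⟩ := Option.isSome_iff_exists.mp t.root_isSome
    obtain ⟨⟨u0', hr'⟩, hcomp0⟩ := hle.2 [] c u hr
    rcases u with _ | r₀
    case some =>
      exact absurd (OTree.ext' fun α => by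
        have := hcomp0 (by simp) α
        simpa using this) hne
    obtain ⟨ps, hch0, hrule⟩ := hpt [] (c, none) hr
    have hch : ∀ k : ℕ, t.label [k] = ps[k]? := fun k => hch0 k
    have hdom : ∀ k : ℕ, (t.label [k]).isSome ↔ k < ps.length := by
      intro k; rw [hch k]; exact isSome_getElem'' _ _
    obtain ⟨ps', hch0', hrule'⟩ := hpt' [] (c, u0') hr'
    have hch' : ∀ k : ℕ, t'.label [k] = ps'[k]? := fun k => hch0' k
    have hdom' : ∀ k : ℕ, (t'.label [k]).isSome ↔ k < ps'.length := by
      intro k; rw [hch' k]; exact isSome_getElem'' _ _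
    rcases hrule with ⟨c1, heq⟩ | ⟨js, c1, res, hmem, heq⟩ | ⟨js, c1, res, i, hi, v, hmem, heq⟩
    · -- t is a start axiom leaf
      injection heq with e1 e2
      subst e1
      have h0 : t.label [0] = none := by rw [hch 0]; exact List.getElem?_nil
      have ht : t = leafT ((c : C), (none : Option R)) := eq_leafT hr h0
      rcases hrule' with ⟨c1', heq'⟩ | ⟨js', c1', res', hmem', heq'⟩ |
        ⟨js', c1', res', i', hi', v', hmem', heq'⟩
      · -- t' also a start axiom leaf : contradiction
        injection heq' with e1' e2'
        injection e2' with ec' eu'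
        subst e1'; subst eu'
        have h0' : t'.label [0] = none := by rw [hch' 0]; exact List.getElem?_nil
        exact absurd (ht.trans (eq_leafT hr' h0').symm) hne
      · -- t' closed by a lifted rule
        injection heq' with e1' e2'
        injection e2' with ec' eu'
        subst ec'; subst e1'; subst eu'
        rcases eq_or_ne js' [] with hje | hje
        · subst hje
          refine ⟨leafT (c, some res'), by rw [ht]; exact Step.tr1 c res' hmem', ?_⟩
          have h0' : t'.label [0] = none := by rw [hch' 0]; exact List.getElem?_nil
          rw [eq_leafT hr' h0']
          exact treeLE_refl _
        · have h0lt : 0 < js'.length := List.length_pos_iff.mpr hje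
          have hhead : js'.head hje = js'[0]'h0lt := by rw [List.getElem_zero]
          refine ⟨_, by rw [ht]; exact Step.tr2 js' c res' hje hmem', ?_⟩
          apply treeLE_nodeT ⟨some res', hr'⟩
          intro k hk
          simp only [List.length_singleton] at hk
          interval_cases k
          have hlab0 : t'.label [0] = some (liftJ (js'[0]'h0lt)) := by
            rw [hch' 0, lget h0lt]
          refine ⟨by simp [hlab0], ?_⟩
          rw [show ([leafT ((js'.head hje).1, (none : Option R))][0]'(by simp)) =
            leafT ((js'.head hje).1, none) from rfl]
          refine treeLE_leafT (w := some ((js'[0]'h0lt).2)) ?_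
          rw [subT_label t' 0 (by simp [hlab0]), hlab0, hhead]
          rfl
      · -- t' opened a partial rule
        injection heq' with e1' e2'
        injection e2' with ec' eu'
        subst ec'; subst e1'; subst eu'
        have h0lt : 0 < js'.length := lt_of_le_of_lt (Nat.zero_le i') hi'
        have hje : js' ≠ [] := List.length_pos_iff.mp h0lt
        have hhead : js'.head hje = js'[0]'h0lt := by rw [List.getElem_zero]
        obtain ⟨w, hlab0⟩ : ∃ w, t'.label [0] = some ((js'[0]'h0lt).1, w) := by
          rcases Nat.eq_zero_or_pos i' with hz | hpos
          · subst hz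
            exact ⟨v', by rw [hch' 0, pget_last hi' v']⟩
          · exact ⟨some ((js'[0]'h0lt).2), by rw [hch' 0, pget_lt hi' v' hpos]; rfl⟩
        refine ⟨_, by rw [ht]; exact Step.tr2 js' c res' hje hmem', ?_⟩
        apply treeLE_nodeT ⟨none, hr'⟩
        intro k hk
        simp only [List.length_singleton] at hk
        interval_cases k
        refine ⟨by simp [hlab0], ?_⟩
        rw [show ([leafT ((js'.head hje).1, (none : Option R))][0]'(by simp)) =
          leafT ((js'.head hje).1, none) from rfl]
        refine treeLE_leafT (w := w) ?_
        rw [subT_label t' 0 (by simp [hlab0]), hlab0, hhead]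
    · -- t's root rule is a lifted rule : impossible (root of t is incomplete)
      injection heq with e1 e2
      injection e2 with ec eu
      exact absurd eu (by simp)
    · -- t's root is a partial rule with i+1 children
      injection heq with e1 e2
      injection e2 with ec eu
      subst ec; subst e1
      have hlabk : ∀ k (hk : k < i), t.label [k] = some (liftJ (js[k]'(lt_trans hk hi))) :=
        fun k hk => by rw [hch k, pget_lt hi v hk]
      have hlabi : t.label [i] = some ((js[i]'hi).1, v) := by rw [hch i, pget_last hi v]
      have hdm : ∀ k : ℕ, (t.label [k]).isSome ↔ k < i + 1 := by
        intro k; rw [hdom k, plen hi v]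
      have ht : t = nodeT (c, none) (childrenT t (i+1)) := eq_nodeT t (c, none) (i+1) hr hdm
      have hisome : (t.label [i]).isSome := by simp [hlabi]
      have hisome' : (t'.label [i]).isSome := hle.1 [i] hisome
      have hpropk : ∀ k (hk : k < i) (β : List ℕ), t.label (k :: β) = t'.label (k :: β) := by
        intro k hk β
        exact (hle.2 [k] ((js[k]'(lt_trans hk hi)).1) (some ((js[k]'(lt_trans hk hi)).2))
          (hlabk k hk)).2 (by simp) β
      rcases v with _ | rr
      · -- last child of t is incomplete
        have hles : TreeLE (subT t i) (subT t' i) := treeLE_subT hle i hisome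
        by_cases hss : subT t i = subT t' i
        · -- then t = t' : contradiction
          exfalso; apply hne
          have hri' : t'.label [i] = some ((js[i]'hi).1, none) := by
            rw [show t'.label [i] = (subT t' i).label [] from (subT_label t' i hisome' []).symm,
              ← hss, subT_label t i hisome]
            exact hlabi
          rcases hrule' with ⟨c1', heq'⟩ | ⟨js', c1', res', hmem', heq'⟩ |
            ⟨js', c1', res', i', hi', v', hmem', heq'⟩
          · injection heq' with e1' e2'
            subst e1'
            have := (hdom' i).mp hisome'
            simp at this
          · injection heq' with e1' e2'
            injection e2' with ec' eu'
            subst e1'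
            have hleni' : i < js'.length := by
              have := (hdom' i).mp hisome'
              rwa [List.length_map] at this
            rw [hch' i, lget hleni'] at hri'
            simp [liftJ] at hri'
          · injection heq' with e1' e2'
            injection e2' with ec' eu'
            subst e1'; subst eu'
            have hilt' : i < i' + 1 := by
              have := (hdom' i).mp hisome'
              rwa [plen hi' v'] at this
            rcases lt_or_eq_of_le (Nat.lt_succ_iff.mp hilt') with hii | hii
            · rw [hch' i, pget_lt hi' v' hii] at hri'
              simp [liftJ] at hri'
            · subst hii
              apply eq_of_children (i+1) (by rw [hr, hr']) hdm
              · intro k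
                rw [hch' k, isSome_getElem'', plen hi' v']
              · intro k hk β
                rcases lt_or_eq_of_le (Nat.lt_succ_iff.mp hk) with hklt | hkeq
                · exact hpropk k hklt β
                · subst hkeq
                  rw [show t.label (k :: β) = (subT t k).label β from
                      (subT_label t k hisome β).symm, hss, subT_label t' k hisome' β]
        · -- recurse into the last child
          have hcard : (domS (subT t i)).ncard ≤ N := by
            have h2 : (domS (subT t i)).ncard < (domS t).ncard := ncard_subT_lt hft i hisome
            omega
          obtain ⟨s'', hstep'', hles''⟩ := ih (subT t i) (subT t' i) hcard
            (isTreeIn_subT hpt i hisome) (isTreeIn_subT hpt' i hisome')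
            (treeFinite_subT hft i hisome) (treeFinite_subT hft' i hisome') hles hss
          refine ⟨nodeT (c, none) (childrenT t i ++ [s'']), ?_, ?_⟩
          · nth_rewrite 1 [ht]
            rw [childrenT_succ]
            refine Step.tr5 js c res (childrenT t i) (subT t i) s'' hmem
              (by simpa using hi) ?_ ?_ hstep''
            · intro k hk
              rw [childrenT_length] at hk
              exact ⟨subT t k, childrenT_get t i k hk, by
                rw [subT_label t k ((hdm k).mpr (by omega))]; exact hlabk k hk⟩
            · simp only [childrenT_length]
              rw [subT_label t i hisome []]
              exact hlabi
          · apply treeLE_nodeT ⟨u0', hr'⟩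
            intro k hk
            simp only [List.length_append, childrenT_length, List.length_singleton] at hk
            rcases lt_or_eq_of_le (Nat.lt_succ_iff.mp hk) with hklt | hkeq
            · have hksome : (t.label [k]).isSome := (hdm k).mpr (by omega)
              refine ⟨hle.1 [k] hksome, ?_⟩
              rw [show (childrenT t i ++ [s''])[k]'(by simpa using hk) = subT t k from by
                rw [List.getElem_append_left (by simpa using hklt)]
                exact childrenT_getElem t i k (by simpa using hklt)]
              exact treeLE_subT hle k hksome
            · subst hkeq
              refine ⟨hisome', ?_⟩
              rw [show (childrenT t k ++ [s''])[k]'(by simpa using hk) = s'' from by simp]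
              exact hles''
      · -- last child of t is complete : step at the root (tr3 or tr4)
        have hpropi : ∀ β, t.label (i :: β) = t'.label (i :: β) := by
          intro β
          exact (hle.2 [i] ((js[i]'hi).1) (some rr) hlabi).2 (by simp) β
        have hri' : t'.label [i] = some ((js[i]'hi).1, some rr) := by
          rw [← hpropi []]; exact hlabi
        rcases hrule' with ⟨c1', heq'⟩ | ⟨js', c1', res', hmem', heq'⟩ |
          ⟨js', c1', res', i', hi', v', hmem', heq'⟩
        · -- t' axiom : impossible, it has child i
          injection heq' with e1' e2'
          subst e1'
          have := (hdom' i).mp hisome'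
          simp at this
        · -- t' closed by lifted rule js'
          injection heq' with e1' e2'
          injection e2' with ec' eu'
          subst ec'; subst e1'; subst eu'
          have hleni' : i < js'.length := by
            have := (hdom' i).mp hisome'
            rwa [List.length_map] at this
          have hjsk : ∀ k (hk : k < i),
              liftJ (js'[k]'(lt_trans hk hleni')) = liftJ (js[k]'(lt_trans hk hi)) := by
            intro k hk
            have h1 : t'.label [k] = some (liftJ (js'[k]'(lt_trans hk hleni'))) := by
              rw [hch' k, lget (lt_trans hk hleni')]
            have h2 : t'.label [k] = some (liftJ (js[k]'(lt_trans hk hi))) := by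
              rw [← hpropk k hk []]; exact hlabk k hk
            have := h1.symm.trans h2
            injection this
          have hjsi : liftJ (js'[i]'hleni') = ((js[i]'hi).1, some rr) := by
            have h1 : t'.label [i] = some (liftJ (js'[i]'hleni')) := by
              rw [hch' i, lget hleni']
            have := h1.symm.trans hri'
            injection this
          by_cases hlen1 : js'.length = i + 1
          · -- tr3 : close the root; the result is t' itself
            refine ⟨_, by
                rw [ht]
                refine Step.tr3 js' c res' (childrenT t (i+1)) hmem' (by simp [hlen1]) ?_
                intro k hk0
                rw [hlen1] at hk0
                refine ⟨subT t k, childrenT_get t (i+1) k hk0, ?_⟩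
                rw [subT_label t k ((hdm k).mpr hk0)]
                rcases lt_or_eq_of_le (Nat.lt_succ_iff.mp hk0) with hklt | hkeq
                · rw [hlabk k hklt, hjsk k hklt]
                · subst hkeq
                  rw [hlabi, hjsi]
              , ?_⟩
            have heqt : nodeT ((c : C), some res') (childrenT t (i+1)) = t' := by
              apply eq_of_children (i+1) (by rw [hr']; rfl)
                (nodeT_childrenT_dom (i+1) hdm)
              · intro k
                rw [hch' k, isSome_getElem'', List.length_map, hlen1]
              · intro k hk β
                rw [nodeT_childrenT_label (i+1) k hk ((hdm k).mpr hk) β]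
                rcases lt_or_eq_of_le (Nat.lt_succ_iff.mp hk) with hklt | hkeq
                · exact hpropk k hklt β
                · subst hkeq
                  exact hpropi β
            rw [heqt]
            exact treeLE_refl t'
          · -- tr4 : open premise i+1 of js'
            have hlt4 : i + 1 < js'.length := by omega
            refine ⟨_, by
                rw [ht]
                refine Step.tr4 js' c res' (childrenT t (i+1)) hmem'
                  (List.length_pos_iff.mp (by simp)) (by simpa using hlt4) ?_
                intro k hk0
                rw [childrenT_length] at hk0
                refine ⟨subT t k, childrenT_get t (i+1) k hk0, ?_⟩
                rw [subT_label t k ((hdm k).mpr hk0)]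
                rcases lt_or_eq_of_le (Nat.lt_succ_iff.mp hk0) with hklt | hkeq
                · rw [hlabk k hklt, hjsk k hklt]
                · subst hkeq
                  rw [hlabi, hjsi]
              , ?_⟩
            simp only [childrenT_length]
            apply treeLE_nodeT ⟨some res', hr'⟩
            intro k hk
            simp only [List.length_append, childrenT_length, List.length_singleton] at hk
            rcases lt_or_eq_of_le (Nat.lt_succ_iff.mp hk) with hklt | hkeq
            · have hksome : (t.label [k]).isSome := (hdm k).mpr hklt
              refine ⟨hle.1 [k] hksome, ?_⟩
              rw [show (childrenT t (i+1) ++ [leafT ((js'[i+1]'hlt4).1, none)])[k]'(by simpa using hk)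
                  = subT t k from by
                rw [List.getElem_append_left (by simpa using hklt)]
                exact childrenT_getElem t (i+1) k (by simpa using hklt)]
              exact treeLE_subT hle k hksome
            · subst hkeq
              have hlab1 : t'.label [i+1] = some (liftJ (js'[i+1]'hlt4)) := by
                rw [hch' (i+1), lget hlt4]
              refine ⟨by simp [hlab1], ?_⟩
              rw [show (childrenT t (i+1) ++ [leafT ((js'[i+1]'hlt4).1, none)])[i+1]'(by simpa using hk)
                  = leafT ((js'[i+1]'hlt4).1, none) from by simp]
              refine treeLE_leafT (w := some ((js'[i+1]'hlt4).2)) ?_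
              rw [subT_label t' (i+1) (by simp [hlab1]), hlab1]
              rfl
        · -- t' is itself mid-rule on js'
          injection heq' with e1' e2'
          injection e2' with ec' eu'
          subst ec'; subst e1'; subst eu'
          have hilt' : i < i' + 1 := by
            have := (hdom' i).mp hisome'
            rwa [plen hi' v'] at this
          rcases lt_or_eq_of_le (Nat.lt_succ_iff.mp hilt') with hii | hii
          · -- i < i' : tr4 with js'
            have hjsk : ∀ k (hk : k < i),
                liftJ (js'[k]'(lt_trans (lt_trans hk hii) hi')) =
                  liftJ (js[k]'(lt_trans hk hi)) := by
              intro k hk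
              have h1 : t'.label [k] = some (liftJ (js'[k]'(lt_trans (lt_trans hk hii) hi'))) := by
                rw [hch' k, pget_lt hi' v' (lt_trans hk hii)]
              have h2 : t'.label [k] = some (liftJ (js[k]'(lt_trans hk hi))) := by
                rw [← hpropk k hk []]; exact hlabk k hk
              have := h1.symm.trans h2
              injection this
            have hjsi : liftJ (js'[i]'(lt_trans hii hi')) = ((js[i]'hi).1, some rr) := by
              have h1 : t'.label [i] = some (liftJ (js'[i]'(lt_trans hii hi'))) := by
                rw [hch' i, pget_lt hi' v' hii]
              have := h1.symm.trans hri'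
              injection this
            have hlt4 : i + 1 < js'.length := by omega
            obtain ⟨w, hlab1⟩ : ∃ w, t'.label [i+1] = some ((js'[i+1]'hlt4).1, w) := by
              rcases lt_or_eq_of_le (Nat.succ_le_of_lt hii) with h1i | h1i
              · exact ⟨some ((js'[i+1]'hlt4).2), by rw [hch' (i+1), pget_lt hi' v' h1i]; rfl⟩
              · subst h1i
                exact ⟨v', by
                  rw [hch' (i+1)]
                  have := pget_last hi' v'
                  simpa using this⟩
            refine ⟨_, by
                rw [ht]
                refine Step.tr4 js' c res' (childrenT t (i+1)) hmem'
                  (List.length_pos_iff.mp (by simp)) (by simpa using hlt4) ?_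
                intro k hk0
                rw [childrenT_length] at hk0
                refine ⟨subT t k, childrenT_get t (i+1) k hk0, ?_⟩
                rw [subT_label t k ((hdm k).mpr hk0)]
                rcases lt_or_eq_of_le (Nat.lt_succ_iff.mp hk0) with hklt | hkeq
                · rw [hlabk k hklt, hjsk k hklt]
                · subst hkeq
                  rw [hlabi, hjsi]
              , ?_⟩
            simp only [childrenT_length]
            apply treeLE_nodeT ⟨none, hr'⟩
            intro k hk
            simp only [List.length_append, childrenT_length, List.length_singleton] at hk
            rcases lt_or_eq_of_le (Nat.lt_succ_iff.mp hk) with hklt | hkeq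
            · have hksome : (t.label [k]).isSome := (hdm k).mpr hklt
              refine ⟨hle.1 [k] hksome, ?_⟩
              rw [show (childrenT t (i+1) ++ [leafT ((js'[i+1]'hlt4).1, none)])[k]'(by simpa using hk)
                  = subT t k from by
                rw [List.getElem_append_left (by simpa using hklt)]
                exact childrenT_getElem t (i+1) k (by simpa using hklt)]
              exact treeLE_subT hle k hksome
            · subst hkeq
              refine ⟨by simp [hlab1], ?_⟩
              rw [show (childrenT t (i+1) ++ [leafT ((js'[i+1]'hlt4).1, none)])[i+1]'(by simpa using hk)
                  = leafT ((js'[i+1]'hlt4).1, none) from by simp]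
              refine treeLE_leafT (w := w) ?_
              rw [subT_label t' (i+1) (by simp [hlab1]), hlab1]
          · -- i = i' : t = t' contradiction
            subst hii
            exfalso; apply hne
            apply eq_of_children (i+1) (by rw [hr, hr']) hdm
            · intro k
              rw [hch' k, isSome_getElem'', plen hi' v']
            · intro k hk β
              rcases lt_or_eq_of_le (Nat.lt_succ_iff.mp hk) with hklt | hkeq
              · exact hpropk k hklt β
              · subst hkeq
                exact hpropi β

end Aux7
section Aux8
variable {C R : Type}

theorem reach {Rules : Set (List (C × R) × (C × R))} :
    ∀ (n : ℕ) (t t' : OTree (Judg C R)), IsPET Rules t → IsPET Rules t' →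
      TreeFinite t → TreeFinite t' → TreeLE t t' → wt t' - wt t ≤ n →
      Relation.ReflTransGen (Step Rules) t t' := by
  intro n
  induction n with
  | zero =>
    intro t t' hpt hpt' hft hft' hle hn
    rcases eq_or_ne t t' with rfl | hne
    · exact Relation.ReflTransGen.refl
    · exfalso
      obtain ⟨t'', hstep, hle''⟩ :=
        next_step (domS t).ncard t t' le_rfl hpt hpt' hft hft' hle hne
      have hft'' : TreeFinite t'' := hft'.subset (domS_mono hle'')
      have h1 : wt t < wt t'' := wt_lt (step_lt hstep).1 (step_lt hstep).2 hft''
      have h2 : wt t'' ≤ wt t' := wt_le hle'' hft'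
      have h3 : wt t ≤ wt t' := wt_le hle hft'
      omega
  | succ n ihn =>
    intro t t' hpt hpt' hft hft' hle hn
    rcases eq_or_ne t t' with rfl | hne
    · exact Relation.ReflTransGen.refl
    · obtain ⟨t'', hstep, hle''⟩ :=
        next_step (domS t).ncard t t' le_rfl hpt hpt' hft hft' hle hne
      have hft'' : TreeFinite t'' := hft'.subset (domS_mono hle'')
      have h1 : wt t < wt t'' := wt_lt (step_lt hstep).1 (step_lt hstep).2 hft''
      have h2 : wt t'' ≤ wt t' := wt_le hle'' hft'
      exact Relation.ReflTransGen.head hstep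
        (ihn t'' t' (isPET_step hstep hpt) hpt' hft'' hft' hle'' (by omega))

end Aux8

/-- on finite partial evaluation trees, one transition step
    implies strict refinement, and refinement implies reachability in finitely
    many steps. -/
theorem step_vs_refinement {C R : Type} (Rules : Set (List (C × R) × (C × R)))
    (t t' : OTree (Judg C R))
    (hpt : IsPET Rules t) (hpt' : IsPET Rules t')
    (hft : TreeFinite t) (hft' : TreeFinite t') :
    (Step Rules t t' → TreeLT t t') ∧
    (TreeLE t t' → Relation.ReflTransGen (Step Rules) t t') := by
  constructor
  · exact fun h => step_lt h
  · exact fun h => reach (wt t' - wt t) t t' hpt hpt' hft hft' h le_rfl
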